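/- Under the standing assumptions, for every β with 0 ≤ β ≤ 1 the equilibrium bids satisfy 0 ≤ bL(β) ≤ bH(β) and bH(β) > 0. -/

import Mathlib

/-- Under the standing assumptions, for every β with 0 ≤ β ≤ 1 the equilibrium
bids satisfy 0 ≤ bL(β) ≤ bH(β) and bH(β) > 0. -/
theorem stmt_2 (t v α δ r : ℝ) (ht : 0 < t) (hδ : 0 < δ) (hδα : δ < α) (hα : α < 1)
    (hr0 : 0 < r) (hr1 : r < 1)
    (hv1 : t * (α / ((2 - α) * δ) + 1 / 2) < v) (hv2 : v < 2 * t)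
    (β : ℝ) (hβ0 : 0 ≤ β) (hβ1 : β ≤ 1) :
    let D := 2 * (α + δ) - 3 * α * δ - 2 * β * (α - δ)
    let L1 := α * δ * (t - 2 * v) + v * (α + δ) - β * (α - δ) * (v - t)
    let L2 := v * (α + δ) - α * δ * (t + v) - β * (α - δ) * (t + v)
    let bL := L1 * L2 * (1 - β) * (1 - r) * (α - δ) / (t * D ^ 2)
    let bH := bL + L1 * β * (1 - r) * (α - δ) / D
    0 ≤ bL ∧ bL ≤ bH ∧ 0 < bH := by
  have hαδ : 0 < α - δ := by linarith
  have h2a : 0 < (2 - α) * δ := by nlinarith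
  have hkey : t * α + t * ((2 - α) * δ) / 2 < v * ((2 - α) * δ) := by
    have e : t * (α / ((2 - α) * δ) + 1 / 2) * ((2 - α) * δ)
        = t * α + t * ((2 - α) * δ) / 2 := by
      rw [mul_assoc, add_mul, div_mul_cancel₀ _ h2a.ne']
      ring
    nlinarith [mul_lt_mul_of_pos_right hv1 h2a]
  have hvt : t < v := by nlinarith [mul_pos ht hδ, mul_pos ht (sub_pos.mpr hδα)]
  intro D L1 L2 bL bH
  have h1β : (0:ℝ) ≤ 1 - β := by linarith
  have h1r : (0:ℝ) < 1 - r := by linarith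
  have hD : 0 < D := by
    have : (0:ℝ) ≤ (1 - β) * (α - δ) := mul_nonneg h1β hαδ.le
    show (0:ℝ) < 2 * (α + δ) - 3 * α * δ - 2 * β * (α - δ)
    nlinarith [mul_pos hδ (show (0:ℝ) < 4 - 3 * α by linarith)]
  have hL1 : 0 < L1 := by
    show (0:ℝ) < α * δ * (t - 2 * v) + v * (α + δ) - β * (α - δ) * (v - t)
    nlinarith [mul_nonneg (mul_nonneg h1β hαδ.le) (show (0:ℝ) ≤ v - t by linarith),
      mul_pos ht (show (0:ℝ) < α * δ + α - δ by nlinarith),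
      mul_pos (mul_pos (show (0:ℝ) < 2 * v by linarith) hδ)
        (show (0:ℝ) < 1 - α by linarith)]
  have hL2 : 0 < L2 := by
    show (0:ℝ) < v * (α + δ) - α * δ * (t + v) - β * (α - δ) * (t + v)
    nlinarith [mul_nonneg (mul_nonneg h1β hαδ.le) (show (0:ℝ) ≤ t + v by linarith),
      hkey, mul_pos (mul_pos ht hδ) (show (0:ℝ) < 4 - 3 * α by linarith)]
  have hden : (0:ℝ) < t * D ^ 2 := by positivity
  have hbL : 0 ≤ bL :=
    div_nonneg (by positivity) hden.le
  have hstep : 0 ≤ L1 * β * (1 - r) * (α - δ) / D :=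
    div_nonneg (by positivity) hD.le
  refine ⟨hbL, by show bL ≤ bL + L1 * β * (1 - r) * (α - δ) / D; linarith, ?_⟩
  rcases lt_or_eq_of_le hβ1 with hβ | hβ
  · have hbLpos : 0 < bL := by
      have h1β' : (0:ℝ) < 1 - β := by linarith
      exact div_pos (by positivity) hden
    have : 0 < bL + L1 * β * (1 - r) * (α - δ) / D := by linarith
    simpa [bH] using this
  · have hβpos : (0:ℝ) < β := by linarith
    have : 0 < L1 * β * (1 - r) * (α - δ) / D := div_pos (by positivity) hD
    have : 0 < bL + L1 * β * (1 - r) * (α - δ) / D := by linarith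
    simpa [bH] using this
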